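/- Fix an integer M ≥ 1 and Δ > 0, and let H : [0,MΔ] → ℂ^{N×N} be continuously differentiable with α := max_s ‖H(s)‖. For a hypercube C = [0,Δ]^q with corner times x_1,...,x_q ∈ [0,(M−1)Δ], the discretization error satisfies ‖∫_C H(x_1+y_1)⋯H(x_q+y_q) d^q y − Δ^q ∏_{j=1}^q H(x_j)‖ ≤ α^{q−1} Δ ∑_{k=1}^q (∏_{j≠k} ∫_0^Δ ds) · ∫_0^Δ ‖H'(x_k+s)‖ ds = α^{q−1} Δ^q ∑_{k=1}^q ∫_0^Δ ‖H'(x_k+s)‖ ds. -/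

import Mathlib

open scoped Matrix.Norms.L2Operator
open MeasureTheory

private lemma aux_norm_one_le {N : ℕ} : ‖(1 : Matrix (Fin N) (Fin N) ℂ)‖ ≤ 1 := by
  rw [Matrix.cstar_norm_def, map_one]
  exact ContinuousLinearMap.norm_id_le

private lemma aux_prod_norm_le {N : ℕ} {α : ℝ} (hα : 0 ≤ α) :
    ∀ {q : ℕ} (B : Fin q → Matrix (Fin N) (Fin N) ℂ), (∀ j, ‖B j‖ ≤ α) →
    ‖(List.ofFn B).prod‖ ≤ α ^ q := by
  intro q
  induction q with
  | zero => intro B _; simpa using aux_norm_one_le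
  | succ n ih =>
    intro B hB
    rw [List.ofFn_succ, List.prod_cons]
    calc ‖B 0 * (List.ofFn fun i : Fin n => B i.succ).prod‖
        ≤ ‖B 0‖ * ‖(List.ofFn fun i : Fin n => B i.succ).prod‖ := norm_mul_le _ _
      _ ≤ α * α ^ n :=
          mul_le_mul (hB 0) (ih _ fun j => hB j.succ) (norm_nonneg _) hα
      _ = α ^ (n + 1) := (pow_succ' α n).symm

private lemma aux_telescope {N : ℕ} {α : ℝ} (hα : 0 ≤ α) :
    ∀ {q : ℕ} (A B : Fin q → Matrix (Fin N) (Fin N) ℂ),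
      (∀ j, ‖A j‖ ≤ α) → (∀ j, ‖B j‖ ≤ α) →
      ‖(List.ofFn A).prod - (List.ofFn B).prod‖ ≤ α ^ (q - 1) * ∑ j, ‖A j - B j‖ := by
  intro q
  induction q with
  | zero => intro A B _ _; simp
  | succ n ih =>
    intro A B hA hB
    rw [List.ofFn_succ, List.ofFn_succ, List.prod_cons, List.prod_cons]
    set P := (List.ofFn fun i : Fin n => A i.succ).prod with hP
    set Q := (List.ofFn fun i : Fin n => B i.succ).prod with hQ
    have hsplit : A 0 * P - B 0 * Q = A 0 * (P - Q) + (A 0 - B 0) * Q := by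
      noncomm_ring
    have h1 : ‖A 0 * (P - Q)‖ ≤ α * (α ^ (n - 1) * ∑ j : Fin n, ‖A j.succ - B j.succ‖) :=
      le_trans (norm_mul_le _ _)
        (mul_le_mul (hA 0) (ih _ _ (fun j => hA j.succ) (fun j => hB j.succ))
          (norm_nonneg _) hα)
    have h2 : ‖(A 0 - B 0) * Q‖ ≤ ‖A 0 - B 0‖ * α ^ n :=
      le_trans (norm_mul_le _ _)
        (mul_le_mul_of_nonneg_left (aux_prod_norm_le hα _ fun j => hB j.succ)
          (norm_nonneg _))
    have h3 : α * (α ^ (n - 1) * ∑ j : Fin n, ‖A j.succ - B j.succ‖)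
        ≤ α ^ n * ∑ j : Fin n, ‖A j.succ - B j.succ‖ := by
      cases n with
      | zero => simp
      | succ m =>
        rw [← mul_assoc, Nat.succ_sub_one, ← pow_succ']
    calc ‖A 0 * P - B 0 * Q‖ ≤ ‖A 0 * (P - Q)‖ + ‖(A 0 - B 0) * Q‖ := by
          rw [hsplit]; exact norm_add_le _ _
      _ ≤ α ^ n * ∑ j : Fin n, ‖A j.succ - B j.succ‖ + ‖A 0 - B 0‖ * α ^ n :=
          add_le_add (le_trans h1 h3) h2
      _ = α ^ n * ∑ j : Fin (n + 1), ‖A j - B j‖ := by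
          rw [Fin.sum_univ_succ]; ring
      _ = α ^ (n + 1 - 1) * ∑ j : Fin (n + 1), ‖A j - B j‖ := by norm_num

theorem hypercube_discretization_error {N : ℕ} (M : ℕ) (hM : 1 ≤ M)
    (Δ α : ℝ) (hΔ : 0 < Δ) (q : ℕ)
    (H H' : ℝ → Matrix (Fin N) (Fin N) ℂ)
    (hderiv : ∀ s ∈ Set.Icc (0 : ℝ) (M * Δ), HasDerivAt H (H' s) s)
    (hcont : ContinuousOn H' (Set.Icc (0 : ℝ) (M * Δ)))
    (hα : ∀ s ∈ Set.Icc (0 : ℝ) (M * Δ), ‖H s‖ ≤ α)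
    (x : Fin q → ℝ)
    (hx : ∀ j, x j ∈ Set.Icc (0 : ℝ) ((M - 1 : ℕ) * Δ)) :
    ‖(∫ y in {y : Fin q → ℝ | ∀ i, y i ∈ Set.Icc (0 : ℝ) Δ},
          (List.ofFn fun j : Fin q => H (x j + y j)).prod) -
        Δ ^ q • (List.ofFn fun j : Fin q => H (x j)).prod‖ ≤
      α ^ (q - 1) * Δ ^ q *
        ∑ k : Fin q, ∫ s in (0 : ℝ)..Δ, ‖H' (x k + s)‖ := by
  -- basic facts
  have hMΔ : 0 ≤ (M : ℝ) * Δ := by positivity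
  have hcast : ((M - 1 : ℕ) : ℝ) = (M : ℝ) - 1 := by
    rw [Nat.cast_sub hM, Nat.cast_one]
  have hα0 : 0 ≤ α :=
    le_trans (norm_nonneg (H 0)) (hα 0 ⟨le_refl _, hMΔ⟩)
  -- the argument x j + s lies in [0, MΔ] for s ∈ [0, Δ]
  have hmem : ∀ (j : Fin q) (s : ℝ), s ∈ Set.Icc (0 : ℝ) Δ →
      x j + s ∈ Set.Icc (0 : ℝ) ((M : ℝ) * Δ) := by
    intro j s hs
    obtain ⟨hx0, hx1⟩ := hx j
    rw [hcast] at hx1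
    constructor
    · linarith [hs.1]
    · nlinarith [hs.2]
  have hmem0 : ∀ j : Fin q, x j ∈ Set.Icc (0 : ℝ) ((M : ℝ) * Δ) :=
    fun j => hmem j 0 (by constructor <;> simp [hΔ.le]) |>.imp
      (by simp) (by simp)
  -- continuity of H on [0, MΔ]
  have hcontH : ContinuousOn H (Set.Icc (0 : ℝ) ((M : ℝ) * Δ)) :=
    fun s hs => (hderiv s hs).continuousAt.continuousWithinAt
  -- single-factor increment bound
  have hinc : ∀ (j : Fin q) (yv : ℝ), yv ∈ Set.Icc (0 : ℝ) Δ →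
      ‖H (x j + yv) - H (x j)‖ ≤ ∫ s in (0 : ℝ)..Δ, ‖H' (x j + s)‖ := by
    intro j yv hy
    have hsub : Set.uIcc (x j) (x j + yv) ⊆ Set.Icc (0 : ℝ) ((M : ℝ) * Δ) := by
      rw [Set.uIcc_of_le (by linarith [hy.1])]
      intro t ht
      obtain ⟨ht0, ht1⟩ := ht
      have := hmem j yv hy
      exact ⟨le_trans (hmem0 j).1 ht0, le_trans ht1 this.2⟩
    have hcont' : ContinuousOn H' (Set.uIcc (x j) (x j + yv)) := hcont.mono hsub
    have hFTC : ∫ t in (x j)..(x j + yv), H' t = H (x j + yv) - H (x j) :=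
      intervalIntegral.integral_eq_sub_of_hasDerivAt
        (fun t ht => hderiv t (hsub ht)) hcont'.intervalIntegrable
    have hint2 : IntervalIntegrable (fun s => ‖H' (x j + s)‖) volume 0 Δ := by
      apply ContinuousOn.intervalIntegrable
      apply ContinuousOn.norm
      apply hcont.comp (by fun_prop : Continuous fun s : ℝ => x j + s).continuousOn
      intro s hs
      rw [Set.uIcc_of_le hΔ.le] at hs
      exact hmem j s hs
    calc ‖H (x j + yv) - H (x j)‖ = ‖∫ t in (x j)..(x j + yv), H' t‖ := by rw [hFTC]
      _ ≤ ∫ t in (x j)..(x j + yv), ‖H' t‖ :=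
          intervalIntegral.norm_integral_le_integral_norm (by linarith [hy.1])
      _ = ∫ s in (0 : ℝ)..yv, ‖H' (x j + s)‖ := by
          rw [intervalIntegral.integral_comp_add_left (fun t => ‖H' t‖) (x j)]
          simp
      _ ≤ ∫ s in (0 : ℝ)..Δ, ‖H' (x j + s)‖ := by
          apply intervalIntegral.integral_mono_interval le_rfl hy.1 hy.2
          · filter_upwards with s using norm_nonneg _
          · exact hint2
  -- the cube
  set S : Set (Fin q → ℝ) := {y : Fin q → ℝ | ∀ i, y i ∈ Set.Icc (0 : ℝ) Δ} with hS
  have hSIcc : S = Set.Icc (0 : Fin q → ℝ) (fun _ => Δ) := by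
    ext y
    simp only [hS, Set.mem_setOf_eq, Set.mem_Icc]
    exact ⟨fun h => ⟨fun i => (h i).1, fun i => (h i).2⟩, fun h i => ⟨h.1 i, h.2 i⟩⟩
  have hSpi : S = Set.univ.pi fun _ : Fin q => Set.Icc (0 : ℝ) Δ := by
    rw [hSIcc]; exact (Set.pi_univ_Icc _ _).symm
  have hScompact : IsCompact S := hSIcc ▸ isCompact_Icc
  have hvol : volume S = ENNReal.ofReal Δ ^ q := by
    rw [hSpi, volume_pi_pi]
    simp [Real.volume_Icc]
  have hvolR : (volume S).toReal = Δ ^ q := by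
    rw [hvol, ENNReal.toReal_pow, ENNReal.toReal_ofReal hΔ.le]
  have hvollt : volume S < ⊤ := by
    rw [hvol]; exact ENNReal.pow_lt_top ENNReal.ofReal_lt_top
  -- integrand and constant
  set f : (Fin q → ℝ) → Matrix (Fin N) (Fin N) ℂ :=
    fun y => (List.ofFn fun j : Fin q => H (x j + y j)).prod with hf
  set c : Matrix (Fin N) (Fin N) ℂ := (List.ofFn fun j : Fin q => H (x j)).prod with hc
  -- continuity of f on S
  have hcontf : ContinuousOn f S := by
    have hprod : Continuous fun v : Fin q → Matrix (Fin N) (Fin N) ℂ =>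
        (List.ofFn v).prod := by
      have := continuous_list_prod (f := fun (i : Fin q) (v : Fin q → Matrix (Fin N) (Fin N) ℂ) => v i)
        (List.finRange q) (fun i _ => continuous_apply i)
      simpa [List.ofFn_eq_map] using this
    apply hprod.comp_continuousOn
    apply continuousOn_pi.2
    intro j
    apply hcontH.comp ((continuous_const.add (continuous_apply j)).continuousOn)
    intro y hy
    exact hmem j (y j) (hy j)
  have hintf : IntegrableOn f S volume := hcontf.integrableOn_compact hScompact
  have hintc : IntegrableOn (fun _ : Fin q → ℝ => c) S volume :=
    integrableOn_const hvollt.ne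
  -- pointwise bound
  set C : ℝ := α ^ (q - 1) * ∑ k : Fin q, ∫ s in (0 : ℝ)..Δ, ‖H' (x k + s)‖ with hC
  have hpt : ∀ y ∈ S, ‖f y - c‖ ≤ C := by
    intro y hy
    have h1 : ‖f y - c‖ ≤ α ^ (q - 1) * ∑ j : Fin q, ‖H (x j + y j) - H (x j)‖ :=
      aux_telescope hα0 _ _ (fun j => hα _ (hmem j (y j) (hy j)))
        (fun j => hα _ (hmem0 j))
    refine le_trans h1 ?_
    apply mul_le_mul_of_nonneg_left _ (by positivity)
    exact Finset.sum_le_sum fun j _ => hinc j (y j) (hy j)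
  -- put it together
  have hconst : Δ ^ q • c = ∫ _ in S, c := by
    rw [setIntegral_const, measureReal_def, hvolR]
  rw [hconst, ← integral_sub hintf hintc]
  calc ‖∫ y in S, (f y - c)‖ ≤ C * (volume S).toReal :=
      norm_setIntegral_le_of_norm_le_const hvollt hpt
    _ = α ^ (q - 1) * Δ ^ q * ∑ k : Fin q, ∫ s in (0 : ℝ)..Δ, ‖H' (x k + s)‖ := by
        rw [hvolR, hC]; ring
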